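/- There exists a finitely additive, rotation-invariant normalized set function on the Borel subsets of the circle group 𝕋 = ℝ/ℤ that differs from Lebesgue measure. Precisely, there is a function m assigning to each Borel set E ⊆ 𝕋 a value m(E) ∈ [0,1], with m(𝕋) = 1, m(E ∪ F) = m(E) + m(F) whenever E, F are disjoint Borel sets, m(x + E) = m(E) for every x ∈ 𝕋 and Borel E, and such that m(E) = 1 for some Borel set E of Lebesgue (Haar) measure zero. In particular, countable additivity is not a redundant axiom in Lebesgue's definition of the integral. -/

import Mathlib

open Filter Set Pointwise

namespace S16

variable {G : Type*} [AddCommGroup G]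

/-- The submodule of bounded real functions on `G`. -/
def Bdd (G : Type*) [AddCommGroup G] : Submodule ℝ (G → ℝ) where
  carrier := {f | ∃ C, ∀ x, |f x| ≤ C}
  add_mem' := by
    rintro f g ⟨C, hC⟩ ⟨D, hD⟩
    exact ⟨C + D, fun x => (abs_add_le _ _).trans (add_le_add (hC x) (hD x))⟩
  zero_mem' := ⟨0, fun x => by simp⟩
  smul_mem' := by
    rintro c f ⟨C, hC⟩
    exact ⟨|c| * C, fun x => by
      rw [Pi.smul_apply, smul_eq_mul, abs_mul]
      exact mul_le_mul_of_nonneg_left (hC x) (abs_nonneg c)⟩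

noncomputable def avg (f : G → ℝ) {n : ℕ} (g : Fin n → G) (x : G) : ℝ :=
  (∑ i, f (x + g i)) / n

noncomputable def Sv (f : G → ℝ) {n : ℕ} (g : Fin n → G) : ℝ :=
  sSup (Set.range (avg f g))

def NSet (f : G → ℝ) : Set ℝ := {r | ∃ (n : ℕ) (_ : 0 < n) (g : Fin n → G), Sv f g = r}

noncomputable def Nf (f : G → ℝ) : ℝ := sInf (NSet f)

variable {f : G → ℝ} {C : ℝ}

lemma abs_avg_le (hC : ∀ x, |f x| ≤ C) {n : ℕ} (hn : 0 < n) (g : Fin n → G) (x : G) :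
    |avg f g x| ≤ C := by
  have hn' : (0:ℝ) < n := by exact_mod_cast hn
  have h1 : |∑ i, f (x + g i)| ≤ (n:ℝ) * C := by
    calc |∑ i, f (x + g i)| ≤ ∑ i, |f (x + g i)| := Finset.abs_sum_le_sum_abs _ _
      _ ≤ ∑ _i : Fin n, C := Finset.sum_le_sum fun i _ => hC _
      _ = (n:ℝ) * C := by simp [mul_comm]
  rw [avg, abs_div, abs_of_pos hn', div_le_iff₀ hn']
  linarith [h1]

lemma bddAbove_avg (hC : ∀ x, |f x| ≤ C) {n : ℕ} (hn : 0 < n) (g : Fin n → G) :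
    BddAbove (Set.range (avg f g)) := by
  refine ⟨C, ?_⟩
  rintro r ⟨x, rfl⟩
  exact (abs_le.1 (abs_avg_le hC hn g x)).2

lemma avg_le_Sv (hC : ∀ x, |f x| ≤ C) {n : ℕ} (hn : 0 < n) (g : Fin n → G) (x : G) :
    avg f g x ≤ Sv f g :=
  le_csSup (bddAbove_avg hC hn g) (mem_range_self x)

lemma Sv_le {B : ℝ} {n : ℕ} (g : Fin n → G) (h : ∀ x, avg f g x ≤ B) :
    Sv f g ≤ B := by
  haveI : Nonempty G := ⟨0⟩
  exact csSup_le (range_nonempty _) (by rintro r ⟨x, rfl⟩; exact h x)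

lemma neg_le_Sv (hC : ∀ x, |f x| ≤ C) {n : ℕ} (hn : 0 < n) (g : Fin n → G) :
    -C ≤ Sv f g :=
  le_trans (abs_le.1 (abs_avg_le hC hn g 0)).1 (avg_le_Sv hC hn g 0)

lemma NSet_nonempty (f : G → ℝ) : (NSet f).Nonempty :=
  ⟨Sv f (fun _ : Fin 1 => (0:G)), 1, one_pos, _, rfl⟩

lemma bddBelow_NSet (hC : ∀ x, |f x| ≤ C) : BddBelow (NSet f) := by
  refine ⟨-C, ?_⟩
  rintro r ⟨n, hn, g, rfl⟩
  exact neg_le_Sv hC hn g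

lemma Nf_le_Sv (hC : ∀ x, |f x| ≤ C) {n : ℕ} (hn : 0 < n) (g : Fin n → G) :
    Nf f ≤ Sv f g :=
  csInf_le (bddBelow_NSet hC) ⟨n, hn, g, rfl⟩

lemma avg_one_zero (f : G → ℝ) : avg f (fun _ : Fin 1 => (0:G)) = f := by
  funext x; simp [avg]

lemma Nf_le_sSup (hC : ∀ x, |f x| ≤ C) : Nf f ≤ sSup (Set.range f) := by
  have := Nf_le_Sv hC one_pos (fun _ : Fin 1 => (0:G))
  rwa [Sv, avg_one_zero] at this


/-- The combined tuple. -/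
def pairT {m n : ℕ} (a : Fin m → G) (b : Fin n → G) : Fin (m * n) → G :=
  fun k => a (finProdFinEquiv.symm k).1 + b (finProdFinEquiv.symm k).2

lemma sum_pairT (h : G → ℝ) {m n : ℕ} (a : Fin m → G) (b : Fin n → G) (x : G) :
    (∑ k : Fin (m * n), h (x + pairT a b k))
      = ∑ p : Fin m × Fin n, h (x + (a p.1 + b p.2)) := by
  rw [← Equiv.sum_comp finProdFinEquiv
    (fun k => h (x + pairT a b k))]
  simp [pairT]

lemma avg_pairT_left (h : G → ℝ) {m n : ℕ} (hm : 0 < m) (hn : 0 < n)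
    (a : Fin m → G) (b : Fin n → G) (x : G) :
    avg h (pairT a b) x = (∑ j : Fin n, avg h a (x + b j)) / n := by
  have hm' : (0:ℝ) < m := by exact_mod_cast hm
  have hn' : (0:ℝ) < n := by exact_mod_cast hn
  rw [avg, sum_pairT, Fintype.sum_prod_type, Finset.sum_comm]
  simp only [avg]
  rw [← Finset.sum_div, div_div, Nat.cast_mul]
  congr 1
  exact Finset.sum_congr rfl fun j _ => Finset.sum_congr rfl fun i _ => by
    congr 1; abel

lemma avg_pairT_right (h : G → ℝ) {m n : ℕ} (hm : 0 < m) (hn : 0 < n)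
    (a : Fin m → G) (b : Fin n → G) (x : G) :
    avg h (pairT a b) x = (∑ i : Fin m, avg h b (x + a i)) / m := by
  have hm' : (0:ℝ) < m := by exact_mod_cast hm
  have hn' : (0:ℝ) < n := by exact_mod_cast hn
  rw [avg, sum_pairT, Fintype.sum_prod_type]
  simp only [avg]
  rw [← Finset.sum_div, div_div, Nat.cast_mul, mul_comm (m:ℝ)]
  congr 1
  exact Finset.sum_congr rfl fun i _ => Finset.sum_congr rfl fun j _ => by
    congr 1; abel


lemma Sv_pairT_le_left (hC : ∀ x, |f x| ≤ C) {m n : ℕ} (hm : 0 < m) (hn : 0 < n)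
    (a : Fin m → G) (b : Fin n → G) :
    Sv f (pairT a b) ≤ Sv f a := by
  have hn' : (0:ℝ) < n := by exact_mod_cast hn
  apply Sv_le
  intro x
  rw [avg_pairT_left f hm hn a b x]
  calc (∑ j : Fin n, avg f a (x + b j)) / n
      ≤ (∑ _j : Fin n, Sv f a) / n := by
        gcongr with j hj
        exact avg_le_Sv hC hm a _
    _ = Sv f a := by
        rw [Finset.sum_const]
        simp
        field_simp

lemma Sv_pairT_le_right (hC : ∀ x, |f x| ≤ C) {m n : ℕ} (hm : 0 < m) (hn : 0 < n)
    (a : Fin m → G) (b : Fin n → G) :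
    Sv f (pairT a b) ≤ Sv f b := by
  have hm' : (0:ℝ) < m := by exact_mod_cast hm
  apply Sv_le
  intro x
  rw [avg_pairT_right f hm hn a b x]
  calc (∑ i : Fin m, avg f b (x + a i)) / m
      ≤ (∑ _i : Fin m, Sv f b) / m := by
        gcongr with i hi
        exact avg_le_Sv hC hn b _
    _ = Sv f b := by
        rw [Finset.sum_const]
        simp
        field_simp

lemma avg_add (f₁ f₂ : G → ℝ) {n : ℕ} (g : Fin n → G) (x : G) :
    avg (f₁ + f₂) g x = avg f₁ g x + avg f₂ g x := by
  simp [avg, Finset.sum_add_distrib, add_div]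

lemma Sv_add_le {f₁ f₂ : G → ℝ} {C₁ C₂ : ℝ} (h₁ : ∀ x, |f₁ x| ≤ C₁)
    (h₂ : ∀ x, |f₂ x| ≤ C₂) {n : ℕ} (hn : 0 < n) (g : Fin n → G) :
    Sv (f₁ + f₂) g ≤ Sv f₁ g + Sv f₂ g := by
  apply Sv_le
  intro x
  rw [avg_add]
  exact add_le_add (avg_le_Sv h₁ hn g x) (avg_le_Sv h₂ hn g x)

lemma Nf_add_le {f₁ f₂ : G → ℝ} {C₁ C₂ : ℝ} (h₁ : ∀ x, |f₁ x| ≤ C₁)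
    (h₂ : ∀ x, |f₂ x| ≤ C₂) :
    Nf (f₁ + f₂) ≤ Nf f₁ + Nf f₂ := by
  have h12 : ∀ x, |(f₁ + f₂) x| ≤ C₁ + C₂ := fun x =>
    (abs_add_le _ _).trans (add_le_add (h₁ x) (h₂ x))
  rw [← sub_le_iff_le_add]
  apply le_csInf (NSet_nonempty f₁)
  rintro r₁ ⟨m, hm, a, rfl⟩
  rw [sub_le_comm]
  apply le_csInf (NSet_nonempty f₂)
  rintro r₂ ⟨n, hn, b, rfl⟩
  have hmain : Nf (f₁ + f₂) ≤ Sv f₁ a + Sv f₂ b := by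
    calc Nf (f₁ + f₂) ≤ Sv (f₁ + f₂) (pairT a b) :=
          Nf_le_Sv h12 (Nat.mul_pos hm hn) (pairT a b)
      _ ≤ Sv f₁ (pairT a b) + Sv f₂ (pairT a b) := Sv_add_le h₁ h₂ (Nat.mul_pos hm hn) _
      _ ≤ Sv f₁ a + Sv f₂ b :=
          add_le_add (Sv_pairT_le_left h₁ hm hn a b) (Sv_pairT_le_right h₂ hm hn a b)
  linarith

lemma Sv_smul {c : ℝ} (hc : 0 < c) (f : G → ℝ) {n : ℕ} (g : Fin n → G) :
    Sv (c • f) g = c * Sv f g := by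
  have h1 : Set.range (avg (c • f) g) = c • Set.range (avg f g) := by
    ext r
    simp only [Set.mem_smul_set, Set.mem_range]
    constructor
    · rintro ⟨x, rfl⟩
      refine ⟨avg f g x, ⟨x, rfl⟩, ?_⟩
      simp only [smul_eq_mul, avg, Pi.smul_apply]
      rw [← Finset.mul_sum, mul_div_assoc]
    · rintro ⟨y, ⟨x, rfl⟩, rfl⟩
      refine ⟨x, ?_⟩
      simp only [smul_eq_mul, avg, Pi.smul_apply]
      rw [← Finset.mul_sum, mul_div_assoc]
  rw [Sv, h1, Real.sSup_smul_of_nonneg hc.le, smul_eq_mul, Sv]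

lemma NSet_smul {c : ℝ} (hc : 0 < c) (f : G → ℝ) :
    NSet (c • f) = c • NSet f := by
  ext r
  simp only [NSet, Set.mem_smul_set, Set.mem_setOf_eq]
  constructor
  · rintro ⟨n, hn, g, rfl⟩
    exact ⟨Sv f g, ⟨n, hn, g, rfl⟩, (Sv_smul hc f g).symm⟩
  · rintro ⟨y, ⟨n, hn, g, rfl⟩, rfl⟩
    exact ⟨n, hn, g, Sv_smul hc f g⟩

lemma Nf_smul {c : ℝ} (hc : 0 < c) (f : G → ℝ) :
    Nf (c • f) = c * Nf f := by
  rw [Nf, NSet_smul hc, Real.sInf_smul_of_nonneg hc.le, smul_eq_mul, Nf]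

lemma Nf_zero : Nf (0 : G → ℝ) = 0 := by
  have h : NSet (0 : G → ℝ) = {0} := by
    ext r
    simp only [NSet, Set.mem_setOf_eq, Set.mem_singleton_iff]
    constructor
    · rintro ⟨n, hn, g, rfl⟩
      have : avg (0 : G → ℝ) g = fun _ => (0:ℝ) := by funext x; simp [avg]
      rw [Sv, this]
      simp [Set.range_const]
    · rintro rfl
      refine ⟨1, one_pos, fun _ => 0, ?_⟩
      have : avg (0 : G → ℝ) (fun _ : Fin 1 => (0:G)) = fun _ => (0:ℝ) := by
        funext x; simp [avg]
      rw [Sv, this]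
      simp [Set.range_const]
  rw [Nf, h, csInf_singleton]

lemma Nf_shift_sub_le (hC : ∀ x, |f x| ≤ C) (g : G) :
    Nf (fun x => f (x + g) - f x) ≤ 0 := by
  haveI : Nonempty G := ⟨0⟩
  have hC0 : 0 ≤ C := le_trans (abs_nonneg _) (hC 0)
  set h : G → ℝ := fun x => f (x + g) - f x with hh
  have hb : ∀ x, |h x| ≤ C + C := fun x => by
    rw [hh]
    dsimp only
    rw [sub_eq_add_neg]
    exact (abs_add_le _ _).trans (by rw [abs_neg]; exact add_le_add (hC _) (hC _))
  have key : ∀ n : ℕ, 0 < n → Nf h ≤ 2 * C / n := by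
    intro n hn
    have hn' : (0:ℝ) < n := by exact_mod_cast hn
    refine (Nf_le_Sv hb hn (fun k : Fin n => (k : ℕ) • g)).trans ?_
    apply Sv_le
    intro x
    have havg : avg h (fun k : Fin n => (k : ℕ) • g) x
        = (f (x + n • g) - f (x + 0 • g)) / n := by
      rw [avg]
      congr 1
      have step : ∀ k : ℕ, h (x + k • g) = f (x + (k + 1) • g) - f (x + k • g) := by
        intro k
        rw [hh]
        dsimp only
        congr 2
        rw [succ_nsmul, add_assoc]
      calc (∑ k : Fin n, h (x + (k:ℕ) • g))
          = ∑ k ∈ Finset.range n, h (x + k • g) :=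
            Fin.sum_univ_eq_sum_range (fun k => h (x + k • g)) n
        _ = ∑ k ∈ Finset.range n,
              ((fun j => f (x + j • g)) (k + 1) - (fun j => f (x + j • g)) k) := by
            exact Finset.sum_congr rfl fun k _ => step k
        _ = f (x + n • g) - f (x + 0 • g) := Finset.sum_range_sub (fun j => f (x + j • g)) n
    rw [havg]
    have hnum : f (x + n • g) - f (x + 0 • g) ≤ 2 * C := by
      have h1 := abs_le.1 (hC (x + n • g))
      have h2 := abs_le.1 (hC (x + 0 • g))
      linarith
    gcongr
  by_contra hlt
  push_neg at hlt
  obtain ⟨n, hn⟩ := exists_nat_gt (2 * C / Nf h)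
  have hn0 : 0 < n := by
    have : (0:ℝ) ≤ 2 * C / Nf h := by positivity
    exact_mod_cast this.trans_lt hn
  have hn' : (0:ℝ) < n := by exact_mod_cast hn0
  have h2 : 2 * C / (n:ℝ) < Nf h := by
    rw [div_lt_iff₀ hn']
    rw [div_lt_iff₀ hlt] at hn
    linarith [hn]
  exact absurd (key n hn0) (not_le.mpr h2)

lemma coe_bdd {f : ↥(Bdd G)} : ∃ C, ∀ x, |(f : G → ℝ) x| ≤ C := f.2

theorem exists_mean :
    ∃ Λ : ↥(Bdd G) →ₗ[ℝ] ℝ, ∀ f : ↥(Bdd G), Λ f ≤ Nf (f : G → ℝ) := by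
  obtain ⟨g, -, hg2⟩ := exists_extension_of_le_sublinear
    (⟨⊥, 0⟩ : (↥(Bdd G)) →ₗ.[ℝ] ℝ) (fun f => Nf (f : G → ℝ))
    (fun c hc f => by
      show Nf ((c • f : ↥(Bdd G)) : G → ℝ) = c * Nf (f : G → ℝ)
      have : ((c • f : ↥(Bdd G)) : G → ℝ) = c • (f : G → ℝ) := rfl
      rw [this, Nf_smul hc])
    (fun f₁ f₂ => by
      obtain ⟨C₁, h₁⟩ := f₁.2
      obtain ⟨C₂, h₂⟩ := f₂.2
      show Nf ((f₁ + f₂ : ↥(Bdd G)) : G → ℝ) ≤ Nf (f₁ : G → ℝ) + Nf (f₂ : G → ℝ)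
      have : ((f₁ + f₂ : ↥(Bdd G)) : G → ℝ) = (f₁ : G → ℝ) + (f₂ : G → ℝ) := rfl
      rw [this]
      exact Nf_add_le h₁ h₂)
    (fun x => by
      have hx : ((x : ↥(Bdd G)) : G → ℝ) = 0 := by
        have h := x.2
        rw [Submodule.mem_bot] at h
        rw [h]; rfl
      simp only [LinearPMap.mk_apply, LinearMap.zero_apply, hx, Nf_zero, le_refl])
  exact ⟨g, hg2⟩

variable (Λ : ↥(Bdd G) →ₗ[ℝ] ℝ)

lemma mean_le (hΛ : ∀ f : ↥(Bdd G), Λ f ≤ Nf (f : G → ℝ)) {f : ↥(Bdd G)} {B : ℝ} (h : ∀ x, (f : G → ℝ) x ≤ B) : Λ f ≤ B := by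
  obtain ⟨C, hC⟩ := f.2
  refine (hΛ f).trans ((Nf_le_sSup hC).trans ?_)
  haveI : Nonempty G := ⟨0⟩
  exact csSup_le (range_nonempty _) (by rintro r ⟨x, rfl⟩; exact h x)

lemma le_mean (hΛ : ∀ f : ↥(Bdd G), Λ f ≤ Nf (f : G → ℝ)) {f : ↥(Bdd G)} {B : ℝ} (h : ∀ x, B ≤ (f : G → ℝ) x) : B ≤ Λ f := by
  have hneg : Λ (-f) ≤ -B := by
    apply mean_le Λ hΛ
    intro x
    have : ((-f : ↥(Bdd G)) : G → ℝ) x = -(f : G → ℝ) x := rfl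
    rw [this]
    linarith [h x]
  rw [map_neg] at hneg
  linarith

/-- Shift operator on bounded functions. -/
def shiftB (g : G) (f : ↥(Bdd G)) : ↥(Bdd G) :=
  ⟨fun x => (f : G → ℝ) (x + g), by
    obtain ⟨C, hC⟩ := f.2
    exact ⟨C, fun x => hC (x + g)⟩⟩

lemma mean_shift (hΛ : ∀ f : ↥(Bdd G), Λ f ≤ Nf (f : G → ℝ)) (g : G) (f : ↥(Bdd G)) : Λ (shiftB g f) = Λ f := by
  obtain ⟨C, hC⟩ := f.2
  have h1 : Λ (shiftB g f - f) ≤ 0 := by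
    refine (hΛ _).trans ?_
    have : ((shiftB g f - f : ↥(Bdd G)) : G → ℝ)
        = fun x => (f : G → ℝ) (x + g) - (f : G → ℝ) x := rfl
    rw [this]
    exact Nf_shift_sub_le hC g
  have h2 : Λ (f - shiftB g f) ≤ 0 := by
    refine (hΛ _).trans ?_
    have : ((f - shiftB g f : ↥(Bdd G)) : G → ℝ)
        = fun x => ((shiftB g f : ↥(Bdd G)) : G → ℝ) (x + -g)
            - ((shiftB g f : ↥(Bdd G)) : G → ℝ) x := by
      funext x
      show (f : G → ℝ) x - (f : G → ℝ) (x + g) = (f : G → ℝ) (x + -g + g) - (f : G → ℝ) (x + g)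
      rw [neg_add_cancel_right]
    rw [this]
    exact Nf_shift_sub_le (fun x => hC (x + g)) (-g)
  rw [map_sub] at h1 h2
  linarith

section Circle
open MeasureTheory
open scoped ENNReal

lemma volume_singleton (x : UnitAddCircle) : volume ({x} : Set UnitAddCircle) = 0 := by
  refine le_antisymm ?_ zero_le
  have h : ∀ n : ℕ, volume ({x} : Set UnitAddCircle)
      ≤ ENNReal.ofReal (2 * ((n:ℝ) + 1)⁻¹) := by
    intro n
    have hsub : ({x} : Set UnitAddCircle) ⊆ Metric.closedBall x ((n:ℝ) + 1)⁻¹ := by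
      rw [Set.singleton_subset_iff, Metric.mem_closedBall, dist_self]
      positivity
    calc volume ({x} : Set UnitAddCircle) ≤ volume (Metric.closedBall x ((n:ℝ) + 1)⁻¹) :=
          measure_mono hsub
      _ = ENNReal.ofReal (1 ⊓ 2 * ((n:ℝ) + 1)⁻¹) := AddCircle.volume_closedBall 1 _
      _ ≤ ENNReal.ofReal (2 * ((n:ℝ) + 1)⁻¹) := ENNReal.ofReal_le_ofReal (min_le_right _ _)
  have ht : Filter.Tendsto (fun n : ℕ => ENNReal.ofReal (2 * ((n:ℝ) + 1)⁻¹))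
      Filter.atTop (nhds 0) := by
    have h1 : Filter.Tendsto (fun n : ℕ => 2 * ((n:ℝ) + 1)⁻¹) Filter.atTop (nhds 0) := by
      have := tendsto_one_div_add_atTop_nhds_zero_nat.const_mul (2:ℝ)
      simpa [one_div, mul_zero] using this
    have := ENNReal.tendsto_ofReal h1
    simpa using this
  exact ge_of_tendsto' ht h

instance : NullSingletonClass (volume : Measure UnitAddCircle) := ⟨volume_singleton⟩

/-- There is a dense Gδ subset of the circle of measure zero, given as a countable
intersection of open dense sets. -/
lemma exists_null_Gdelta_dense :
    ∃ V : ℕ → Set UnitAddCircle, (∀ n, IsOpen (V n)) ∧ (∀ n, Dense (V n)) ∧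
      volume (⋂ n, V n) = 0 := by
  obtain ⟨s, hsc, hsd⟩ := TopologicalSpace.exists_countable_dense UnitAddCircle
  have hs0 : volume s = 0 := hsc.measure_zero _
  have hU : ∀ n : ℕ, ∃ V ⊇ s, IsOpen V ∧ volume V < (n : ℝ≥0∞)⁻¹ := by
    intro n
    refine Set.exists_isOpen_lt_of_lt s _ ?_
    rw [hs0]
    exact ENNReal.inv_pos.2 (ENNReal.natCast_ne_top n)
  choose V hVs hVo hVlt using hU
  refine ⟨V, hVo, fun n => hsd.mono (hVs n), ?_⟩
  refine le_antisymm ?_ zero_le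
  refine ge_of_tendsto' ENNReal.tendsto_inv_nat_nhds_zero fun n => ?_
  exact le_trans (measure_mono (Set.iInter_subset V n)) (hVlt n).le

end Circle

end S16

open MeasureTheory




open MeasureTheory

/-- There is a finitely additive, rotation-invariant, normalized set
function on the Borel subsets of the circle group `𝕋 = ℝ/ℤ` assigning value `1` to some
set of Haar (Lebesgue) measure zero; in particular it differs from Lebesgue measure, so
countable additivity is not a redundant axiom in Lebesgue's definition of the integral. -/
theorem statement16 :
    ∃ m : Set UnitAddCircle → ℝ,
      (∀ E : Set UnitAddCircle, MeasurableSet E → 0 ≤ m E ∧ m E ≤ 1) ∧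
      m Set.univ = 1 ∧
      (∀ E F : Set UnitAddCircle, MeasurableSet E → MeasurableSet F → Disjoint E F →
        m (E ∪ F) = m E + m F) ∧
      (∀ (x : UnitAddCircle) (E : Set UnitAddCircle), MeasurableSet E →
        m ((fun t => x + t) '' E) = m E) ∧
      ∃ E : Set UnitAddCircle, MeasurableSet E ∧ volume E = 0 ∧ m E = 1 := by
  classical
  obtain ⟨V, hVo, hVd, hV0⟩ := S16.exists_null_Gdelta_dense
  set E₀ : Set UnitAddCircle := ⋂ n, V n with hE₀def
  have hE₀d : Dense E₀ := dense_iInter_of_isOpen hVo hVd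
  have hbij : ∀ x : UnitAddCircle, Function.Bijective (fun t => x + t) := by
    intro x
    exact ⟨fun a b h => by simpa using congrArg (fun z => -x + z) h,
      fun b => ⟨-x + b, by simp⟩⟩
  have htrans : ∀ x : UnitAddCircle, (fun t => x + t) '' E₀ = ⋂ n, (fun t => x + t) '' V n :=
    fun x => Set.image_iInter (hbij x) V
  have hGδ : ∀ x : UnitAddCircle, IsGδ ((fun t => x + t) '' E₀) := by
    intro x
    rw [htrans x]
    exact IsGδ.iInter_of_isOpen fun n => isOpenMap_add_left x _ (hVo n)
  have hDen : ∀ x : UnitAddCircle, Dense ((fun t => x + t) '' E₀) := fun x =>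
    ((hbij x).2.denseRange).dense_image (continuous_add_left x) hE₀d
  set 𝒮 : Set (Set UnitAddCircle) :=
    Set.range (fun x : UnitAddCircle => (fun t => x + t) '' E₀) with h𝒮def
  have hgen : (Filter.generate 𝒮).NeBot := by
    rw [Filter.generate_neBot_iff]
    intro t hts htfin
    have hd : Dense (⋂₀ t) := by
      refine dense_sInter_of_Gδ ?_ htfin.countable ?_
      · intro s hs
        obtain ⟨x, rfl⟩ := hts hs
        exact hGδ x
      · intro s hs
        obtain ⟨x, rfl⟩ := hts hs
        exact hDen x
    exact hd.nonempty
  obtain ⟨U, hUle⟩ := Ultrafilter.exists_le (Filter.generate 𝒮)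
  have hmem : ∀ x : UnitAddCircle, (fun t => x + t) '' E₀ ∈ U := fun x =>
    hUle (Filter.mem_generate_of_mem ⟨x, rfl⟩)
  obtain ⟨Λ, hΛ⟩ := S16.exists_mean (G := UnitAddCircle)
  set φ : Set UnitAddCircle → ↥(S16.Bdd UnitAddCircle) := fun A =>
    ⟨fun x => if (fun t => x + t) '' A ∈ U then (1:ℝ) else 0,
      ⟨1, fun x => by dsimp only; split <;> norm_num⟩⟩ with hφdef
  have hφ01 : ∀ A x, (0:ℝ) ≤ (φ A : UnitAddCircle → ℝ) x ∧ (φ A : UnitAddCircle → ℝ) x ≤ 1 := by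
    intro A x
    show (0:ℝ) ≤ (if (fun t => x + t) '' A ∈ U then (1:ℝ) else 0) ∧ _
    constructor <;> [skip; show (if (fun t => x + t) '' A ∈ U then (1:ℝ) else 0) ≤ 1]
    all_goals split <;> norm_num
  have hbounds : ∀ A : Set UnitAddCircle, 0 ≤ Λ (φ A) ∧ Λ (φ A) ≤ 1 := fun A =>
    ⟨S16.le_mean Λ hΛ fun x => (hφ01 A x).1, S16.mean_le Λ hΛ fun x => (hφ01 A x).2⟩
  have hconst1 : ∀ A : Set UnitAddCircle,
      (∀ x : UnitAddCircle, (fun t => x + t) '' A ∈ U) → Λ (φ A) = 1 := by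
    intro A hA
    refine le_antisymm (hbounds A).2 ?_
    refine S16.le_mean Λ hΛ fun x => ?_
    show (1:ℝ) ≤ if (fun t => x + t) '' A ∈ U then (1:ℝ) else 0
    rw [if_pos (hA x)]
  refine ⟨fun A => Λ (φ A), fun E _ => hbounds E, ?_, ?_, ?_, E₀, ?_, hV0, ?_⟩
  · -- univ
    refine hconst1 _ fun x => ?_
    have : (fun t => x + t) '' (Set.univ : Set UnitAddCircle) = Set.univ := by
      rw [Set.image_univ]
      exact Set.range_eq_univ.2 (hbij x).2
    rw [this]
    exact Filter.univ_mem
  · -- additivity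
    intro A B _ _ hAB
    show Λ (φ (A ∪ B)) = Λ (φ A) + Λ (φ B)
    have hφadd : φ (A ∪ B) = φ A + φ B := by
      apply Subtype.ext
      funext x
      show (if (fun t => x + t) '' (A ∪ B) ∈ U then (1:ℝ) else 0)
        = (if (fun t => x + t) '' A ∈ U then (1:ℝ) else 0)
          + (if (fun t => x + t) '' B ∈ U then (1:ℝ) else 0)
      rw [Set.image_union]
      have hinj : Function.Injective (fun t : UnitAddCircle => x + t) := (hbij x).1
      have hdisj : Disjoint ((fun t => x + t) '' A) ((fun t => x + t) '' B) :=
        (Set.disjoint_image_iff hinj).2 hAB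
      simp only [Ultrafilter.union_mem_iff]
      by_cases hA : (fun t => x + t) '' A ∈ U <;> by_cases hB : (fun t => x + t) '' B ∈ U
      · exfalso
        have hint := Filter.inter_mem hA hB
        rw [Set.disjoint_iff_inter_eq_empty.1 hdisj] at hint
        exact Ultrafilter.empty_notMem hint
      · rw [if_pos (Or.inl hA), if_pos hA, if_neg hB]; norm_num
      · rw [if_pos (Or.inr hB), if_neg hA, if_pos hB]; norm_num
      · rw [if_neg (by tauto), if_neg hA, if_neg hB]; norm_num
    rw [hφadd, map_add]
  · -- invariance
    intro y A _
    show Λ (φ ((fun t => y + t) '' A)) = Λ (φ A)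
    have hφsh : φ ((fun t => y + t) '' A) = S16.shiftB y (φ A) := by
      apply Subtype.ext
      funext x
      show (if (fun t => x + t) '' ((fun t => y + t) '' A) ∈ U then (1:ℝ) else 0)
        = (if (fun t => (x + y) + t) '' A ∈ U then (1:ℝ) else 0)
      have himg : (fun t => x + t) '' ((fun t => y + t) '' A) = (fun t => (x + y) + t) '' A := by
        rw [Set.image_image]
        have hfun : (fun t : UnitAddCircle => x + (y + t)) = fun t => (x + y) + t :=
          funext fun t => (add_assoc x y t).symm
        rw [hfun]
      rw [himg]
    rw [hφsh, S16.mean_shift Λ hΛ]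
  · -- measurability of E₀
    exact MeasurableSet.iInter fun n => (hVo n).measurableSet
  · -- m E₀ = 1
    exact hconst1 _ hmem
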